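/- In the real constraint domain ℛ𝕖 — whose basic values are the real numbers, which has no data constructors, and whose primitive predicates include the ternary op₊, with op₊(t,s,u) true in ℛ𝕖 iff t, s, u are real numbers with t + s = u, and the binary cp≥, with cp≥(t,s) true in ℛ𝕖 iff t, s are real numbers with t ≥ s — consider the existential constraint π(X) = ∃Y(op₊(Y,Y,X)), a CLP(ℛ𝕖)-program 𝒫 including the clause p(X) ← op₊(Y,Y,X) and containing no other occurrence of the defined predicate symbol p, the constraint set Π = {cp≥(X, 0.0)} and the variable X. Then Π ⊨_ℛ𝕖 π(X), but 𝒫 ⊢_CHL (p(X) ⇐ Π) does not hold; in particular, there is no term s such that Π ⊨_ℛ𝕖 op₊(s,s,X). -/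

import Mathlib

open Classical

namespace SQCLP

/-- A term signature: variables, basic values and ranked data constructors. -/
structure TSig where
  Var : Type
  BV : Type
  DC : Type
  dcArity : DC → ℕ

/-- Terms over a term signature. -/
inductive Term (S : TSig) : Type
  | var : S.Var → Term S
  | bv : S.BV → Term S
  | app : S.DC → List (Term S) → Term S

/-- Substitutions map variables to terms. -/
abbrev Subst (S : TSig) := S.Var → Term S

variable {S : TSig}

mutual
  /-- Application of a substitution to a term. -/
  def Term.subst (θ : Subst S) : Term S → Term S
    | .var x => θ x
    | .bv u => .bv u
    | .app c ts => .app c (Term.substList θ ts)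
  /-- Application of a substitution to a list of terms. -/
  def Term.substList (θ : Subst S) : List (Term S) → List (Term S)
    | [] => []
    | t :: ts => Term.subst θ t :: Term.substList θ ts
end

/-- Composition of substitutions: `(σ.comp ν) x = (σ x) ν`. -/
def Subst.comp (σ ν : Subst S) : Subst S := fun x => (σ x).subst ν

/-- A term is ground if it contains no variables. -/
inductive Term.IsGround : Term S → Prop
  | bv (u : S.BV) : IsGround (.bv u)
  | app (c : S.DC) (ts : List (Term S)) : (∀ t ∈ ts, IsGround t) → IsGround (.app c ts)

/-- The variable `x` occurs in the given term. -/
inductive Term.HasVar (x : S.Var) : Term S → Prop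
  | var : HasVar x (.var x)
  | app (c : S.DC) (ts : List (Term S)) (t : Term S) :
      t ∈ ts → HasVar x t → HasVar x (.app c ts)

/-- A valuation is a substitution all whose values are ground terms. -/
def IsValuation (η : Subst S) : Prop := ∀ x, (η x).IsGround

/-- A constraint domain over a term signature: ranked primitive predicate
symbols together with their interpretation on (ground) argument tuples. -/
structure ConstraintDomain (S : TSig) where
  PP : Type
  ppArity : PP → ℕ
  primTrue : PP → List (Term S) → Prop

variable {Cd : ConstraintDomain S}

/-- Atomic constraints: primitive atoms and equations. -/
inductive ACon (Cd : ConstraintDomain S) : Type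
  | prim : Cd.PP → List (Term S) → ACon Cd
  | eq : Term S → Term S → ACon Cd

/-- Application of a substitution to an atomic constraint. -/
def ACon.subst (θ : Subst S) : ACon Cd → ACon Cd
  | .prim r ts => .prim r (ts.map (Term.subst θ))
  | .eq t s => .eq (t.subst θ) (s.subst θ)

/-- Truth of a (ground) atomic constraint: primitive atoms via the
interpretation of the constraint domain; a ground equation is true iff its two
sides are syntactically identical. -/
def ACon.holds : ACon Cd → Prop
  | .prim r ts => Cd.primTrue r ts
  | .eq t s => t = s

/-- A valuation `η` solves an atomic constraint `c` iff `c η` is true. -/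
def solves (η : Subst S) (c : ACon Cd) : Prop := (c.subst η).holds

/-- The variable `x` occurs in the atomic constraint. -/
inductive ACon.HasVar (x : S.Var) : ACon Cd → Prop
  | prim (r : Cd.PP) (ts : List (Term S)) (t : Term S) :
      t ∈ ts → Term.HasVar x t → HasVar x (.prim r ts)
  | eqL (t s : Term S) : Term.HasVar x t → HasVar x (.eq t s)
  | eqR (t s : Term S) : Term.HasVar x s → HasVar x (.eq t s)

/-- The set of solutions (valuations) of a set of atomic constraints. -/
def SolC (Pi : Set (ACon Cd)) : Set (Subst S) :=
  {η | IsValuation η ∧ ∀ c ∈ Pi, solves η c}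

/-- A set of constraints is satisfiable iff it has some solution. -/
def Satisfiable (Pi : Set (ACon Cd)) : Prop := (SolC Pi).Nonempty

/-- Constraint entailment `Pi ⊨ c`. -/
def entails (Pi : Set (ACon Cd)) (c : ACon Cd) : Prop := ∀ η ∈ SolC Pi, solves η c

/-- An existential constraint `∃ Y₁ … Y_k (B₁ ∧ … ∧ B_m)`. -/
structure ExCon (Cd : ConstraintDomain S) where
  evars : List S.Var
  body : List (ACon Cd)

/-- A valuation `η` solves an existential constraint iff some valuation
agreeing with `η` except possibly on the existential variables makes every
atomic constraint of the body true. -/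
def ExCon.SolvedBy (e : ExCon Cd) (η : Subst S) : Prop :=
  ∃ η' : Subst S, IsValuation η' ∧ (∀ x, x ∉ e.evars → η' x = η x) ∧
    ∀ c ∈ e.body, solves η' c

/-- Entailment of an existential constraint. -/
def entailsEx (Pi : Set (ACon Cd)) (e : ExCon Cd) : Prop := ∀ η ∈ SolC Pi, e.SolvedBy η

/-- A free variable of an existential constraint. -/
def ExCon.FVar (e : ExCon Cd) (x : S.Var) : Prop :=
  x ∉ e.evars ∧ ∃ c ∈ e.body, ACon.HasVar x c

/-- Atoms over a constraint domain and an alphabet `DP` of defined predicate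
symbols: defined atoms, primitive atoms and equations. -/
inductive Atom (Cd : ConstraintDomain S) (DP : Type) : Type
  | defined : DP → List (Term S) → Atom Cd DP
  | prim : Cd.PP → List (Term S) → Atom Cd DP
  | eq : Term S → Term S → Atom Cd DP

variable {DP : Type}

/-- Application of a substitution to an atom. -/
def Atom.subst (θ : Subst S) : Atom Cd DP → Atom Cd DP
  | .defined p ts => .defined p (ts.map (Term.subst θ))
  | .prim r ts => .prim r (ts.map (Term.subst θ))
  | .eq t s => .eq (t.subst θ) (s.subst θ)

/-- Atomic constraints regarded as atoms. -/
def ACon.toAtom : ACon Cd → Atom Cd DP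
  | .prim r ts => .prim r ts
  | .eq t s => .eq t s

/-- The variable `x` occurs in the atom. -/
inductive Atom.HasVar (x : S.Var) : Atom Cd DP → Prop
  | defined (p : DP) (ts : List (Term S)) (t : Term S) :
      t ∈ ts → Term.HasVar x t → HasVar x (.defined p ts)
  | prim (r : Cd.PP) (ts : List (Term S)) (t : Term S) :
      t ∈ ts → Term.HasVar x t → HasVar x (.prim r ts)
  | eqL (t s : Term S) : Term.HasVar x t → HasVar x (.eq t s)
  | eqR (t s : Term S) : Term.HasVar x s → HasVar x (.eq t s)

/-- A clause `p(t₁,…,tₙ) ← B₁,…,Bₘ` of a CLP(𝒞)-program. -/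
structure Clause (Cd : ConstraintDomain S) (DP : Type) where
  head : DP
  args : List (Term S)
  body : List (Atom Cd DP)

/-- Constrained Horn Logic derivability `𝒫 ⊢_CHL (A ⇐ Pi)`, with the inference
rules (DA), (EA) and (PA). -/
inductive CHL (P : Set (Clause Cd DP)) (Pi : Set (ACon Cd)) : Atom Cd DP → Prop
  | DA (cl : Clause Cd DP) (θ : Subst S) (args' : List (Term S))
      (hmem : cl ∈ P) (hlen : args'.length = cl.args.length)
      (hargs : ∀ (i : ℕ) (h1 : i < args'.length) (h2 : i < cl.args.length),
        CHL P Pi (.eq (args'.get ⟨i, h1⟩) ((cl.args.get ⟨i, h2⟩).subst θ)))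
      (hbody : ∀ B ∈ cl.body, CHL P Pi (B.subst θ)) :
      CHL P Pi (.defined cl.head args')
  | EA (t s : Term S) (h : entails Pi (.eq t s)) : CHL P Pi (.eq t s)
  | PA (r : Cd.PP) (ts : List (Term S)) (h : entails Pi (.prim r ts)) :
      CHL P Pi (.prim r ts)

end SQCLP

namespace SQCLP

/-- The term signature of the real constraint domain `ℛ𝕖`: variables `ℕ`,
basic values the real numbers, no data constructors. -/
def RSig : TSig := { Var := ℕ, BV := ℝ, DC := Empty, dcArity := fun e => e.elim }

/-- The primitive predicate symbols `op₊` (ternary) and `cp≥` (binary). -/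
inductive RPP : Type
  | opPlus : RPP
  | cpGe : RPP

/-- The real constraint domain `ℛ𝕖`: `op₊(t,s,u)` is true iff `t,s,u` are real
numbers with `t + s = u`, and `cp≥(t,s)` is true iff `t,s` are real numbers
with `t ≥ s`. -/
def RCd : ConstraintDomain RSig where
  PP := RPP
  ppArity := fun r => match r with | .opPlus => 3 | .cpGe => 2
  primTrue := fun r ts => match r with
    | .opPlus => ∃ a b c : ℝ, ts = [Term.bv a, Term.bv b, Term.bv c] ∧ a + b = c
    | .cpGe => ∃ a b : ℝ, ts = [Term.bv a, Term.bv b] ∧ a ≥ b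

/-- A single defined predicate symbol `p` (unary). -/
inductive RDP : Type
  | p : RDP

/-- The variable `X`. -/
def vX : Term RSig := Term.var (0 : ℕ)
/-- The variable `Y`. -/
def vY : Term RSig := Term.var (1 : ℕ)

/-- The existential constraint `π(X) = ∃Y (op₊(Y,Y,X))`. -/
def piX : ExCon RCd := ⟨[(1 : ℕ)], [ACon.prim RPP.opPlus [vY, vY, vX]]⟩

/-- The clause `p(X) ← op₊(Y,Y,X)`. -/
def C₀ : Clause RCd RDP := ⟨RDP.p, [vX], [Atom.prim RPP.opPlus [vY, vY, vX]]⟩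

/-- The constraint set `Π = {cp≥(X, 0.0)}`. -/
def PiR : Set (ACon RCd) := {ACon.prim RPP.cpGe [vX, Term.bv (0 : ℝ)]}

instance : OfNat RSig.Var 0 := ⟨(0 : ℕ)⟩
instance : OfNat RSig.Var 1 := ⟨(1 : ℕ)⟩
instance : DecidableEq RSig.Var := fun a b => instDecidableEqNat a b

@[simp] lemma subst_var {S : TSig} (θ : Subst S) (x : S.Var) :
    Term.subst θ (.var x) = θ x := rfl
@[simp] lemma subst_bv {S : TSig} (θ : Subst S) (u : S.BV) :
    Term.subst θ (.bv u) = .bv u := rfl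
lemma subst_app {S : TSig} (θ : Subst S) (c : S.DC) (ts : List (Term S)) :
    Term.subst θ (.app c ts) = .app c (Term.substList θ ts) := rfl

/-- The valuation sending every variable to `0`. -/
def eta1 : Subst RSig := fun _ => Term.bv (0 : ℝ)

/-- The valuation sending `X` to `1` and every other variable to `0`. -/
def eta2 : Subst RSig := fun n => if n = 0 then Term.bv (1 : ℝ) else Term.bv (0 : ℝ)

lemma eta1_sol : eta1 ∈ SolC PiR := by
  refine ⟨fun x => Term.IsGround.bv _, fun c hc => ?_⟩
  simp only [PiR, Set.mem_singleton_iff] at hc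
  subst hc
  show (ACon.subst eta1 _).holds
  simp only [ACon.subst, List.map, subst_var, subst_bv, vX, eta1]
  exact ⟨0, 0, rfl, le_refl 0⟩

lemma eta2_sol : eta2 ∈ SolC PiR := by
  refine ⟨fun x => by unfold eta2; split <;> exact Term.IsGround.bv _, fun c hc => ?_⟩
  simp only [PiR, Set.mem_singleton_iff] at hc
  subst hc
  show (ACon.subst eta2 _).holds
  simp only [ACon.subst, List.map, subst_var, subst_bv, vX, eta2, if_pos rfl]
  exact ⟨1, 0, rfl, zero_le_one⟩

lemma bv_inj {u v : ℝ} (h : (Term.bv u : Term RSig) = Term.bv v) : u = v := by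
  injection h

lemma key (s t : Term RSig) (he : entails PiR (.eq vX t))
    (hp : entails PiR (.prim RPP.opPlus [s, s, t])) : False := by
  have he1 := he eta1 eta1_sol
  have he2 := he eta2 eta2_sol
  simp only [solves, ACon.subst, ACon.holds, subst_var, vX] at he1 he2
  change Term.bv (0:ℝ) = Term.subst eta1 t at he1
  change Term.bv (1:ℝ) = Term.subst eta2 t at he2
  -- t must be the variable X
  have ht : t = vX := by
    cases t with
    | var x =>
      rw [subst_var] at he2
      by_cases hx : x = 0
      · subst hx; rfl
      · rw [show eta2 x = Term.bv (0:ℝ) from if_neg hx] at he2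
        exact absurd (bv_inj he2) one_ne_zero
    | bv u =>
      rw [subst_bv] at he1 he2
      have h1 := bv_inj he1
      have h2 := bv_inj he2
      exact absurd (h2.trans h1.symm) (one_ne_zero (α := ℝ))
    | app c ts => rw [subst_app] at he2; cases he2
  subst ht
  have hp1 := hp eta1 eta1_sol
  have hp2 := hp eta2 eta2_sol
  simp only [solves, ACon.subst, ACon.holds, List.map, subst_var, vX] at hp1 hp2
  change ∃ a b c : ℝ, [Term.subst eta1 s, Term.subst eta1 s, Term.bv (0:ℝ)] = [Term.bv a, Term.bv b, Term.bv c] ∧ a + b = c at hp1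
  change ∃ a b c : ℝ, [Term.subst eta2 s, Term.subst eta2 s, Term.bv (1:ℝ)] = [Term.bv a, Term.bv b, Term.bv c] ∧ a + b = c at hp2
  obtain ⟨a, b, c, h1, h2⟩ := hp1
  obtain ⟨a', b', c', h1', h2'⟩ := hp2
  simp only [List.cons.injEq, and_true] at h1 h1'
  obtain ⟨hsa, hsb, hc⟩ := h1
  obtain ⟨hsa', hsb', hc'⟩ := h1'
  have hca : (0:ℝ) = c := bv_inj hc
  have hca' : (1:ℝ) = c' := bv_inj hc'
  cases s with
  | var x =>
    rw [subst_var] at hsa' hsb'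
    by_cases hx : x = 0
    · subst hx
      rw [show eta2 0 = Term.bv (1:ℝ) from rfl] at hsa' hsb'
      have ha' := bv_inj hsa'
      have hb' := bv_inj hsb'
      linarith
    · rw [show eta2 x = Term.bv (0:ℝ) from if_neg hx] at hsa' hsb'
      have ha' := bv_inj hsa'
      have hb' := bv_inj hsb'
      linarith
  | bv u =>
    rw [subst_bv] at hsa hsb hsa' hsb'
    have ha := bv_inj hsa
    have hb := bv_inj hsb
    have ha' := bv_inj hsa'
    have hb' := bv_inj hsb'
    change ℝ at u
    linarith
  | app c2 ts =>
    rw [subst_app] at hsa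
    cases hsa

/-- in the real constraint domain, for any program `𝒫` containing
the clause `p(X) ← op₊(Y,Y,X)` and no other occurrence of `p`, with
`Π = {cp≥(X,0.0)}`: `Π ⊨ π(X)` holds, yet `𝒫 ⊢_CHL (p(X) ⇐ Π)` does not; in
particular there is no term `s` with `Π ⊨ op₊(s,s,X)`. -/
theorem stmt6 (P : Set (Clause RCd RDP)) (hmem : C₀ ∈ P)
    (honly : ∀ cl ∈ P, (cl.head = RDP.p ∨
      ∃ A ∈ cl.body, ∃ ts, A = Atom.defined RDP.p ts) → cl = C₀) :
    entailsEx PiR piX ∧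
    ¬ CHL P PiR (.defined RDP.p [vX]) ∧
    ∀ s : Term RSig, ¬ entails PiR (ACon.prim RPP.opPlus [s, s, vX]) := by
  have part3 : ∀ s : Term RSig, ¬ entails PiR (ACon.prim RPP.opPlus [s, s, vX]) := by
    intro s hs
    refine key s vX ?_ hs
    intro η hη
    simp [solves, ACon.subst, ACon.holds]
  refine ⟨?_, ?_, part3⟩
  · -- entailsEx
    intro η hη
    obtain ⟨hval, hsol⟩ := hη
    have h := hsol _ (Set.mem_singleton _)
    simp only [solves, ACon.subst, ACon.holds, List.map, Term.subst, vX] at h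
    obtain ⟨a, b, heq, hab⟩ := h
    simp only [List.cons.injEq, and_true] at heq
    obtain ⟨h0, _⟩ := heq
    refine ⟨fun n => if n = 1 then Term.bv (a / 2) else η n, ?_, ?_, ?_⟩
    · intro x; dsimp only; split
      · exact Term.IsGround.bv _
      · exact hval x
    · intro x hx
      have hx1 : x ≠ 1 := by intro h; subst h; exact hx (List.mem_singleton.mpr rfl)
      simp [hx1]
    · intro c hc
      simp only [piX, List.mem_singleton] at hc
      subst hc
      show (ACon.subst _ _).holds
      simp only [ACon.subst, List.map, Term.subst, vX, vY, if_pos rfl]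
      refine ⟨a / 2, a / 2, a, ?_, by ring⟩
      change [Term.bv (a/2), Term.bv (a/2), η 0] = _
      rw [← h0]
      rfl
  · -- not derivable
    intro h
    cases h with
    | DA cl θ args' hmem' hlen hargs hbody =>
      have hcl : cl = C₀ := honly cl hmem' (Or.inl (by cases hh : cl.head; rfl))
      subst hcl
      have hb := hbody _ (List.mem_singleton.mpr rfl)
      simp only [Atom.subst, List.map, subst_var, vX, vY] at hb
      have hbent : entails PiR (ACon.prim RPP.opPlus [θ 1, θ 1, θ 0]) := by
        cases hb with
        | PA r ts hent => exact hent
      have ha := hargs 0 (by simp) (by simp [C₀])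
      simp only [C₀, List.get, subst_var, vX] at ha
      have haent : entails PiR (ACon.eq vX (θ 0)) := by
        cases ha with
        | EA t s hent => exact hent
      exact key (θ 1) (θ 0) haent hbent

end SQCLP
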